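/- Fix ε ∈ (0,1/3) and K > 0, let (λ_k)_{k≥1} have the Airy-eigenvalue property with constant K, and set θ₁ := ⌈4K⌉. There exists a positive constant S₀ (depending only on ε and K, chosen in particular so large that θ₁ < θ₂ below) such that for every s ≥ S₀, every T ≥ 0, and all nonnegative reals (D_k), writing θ₂ := ⌈2 s^{3/2}/(3π) + 1/2⌉, one has Σ_{k=θ₁+1}^{θ₂−1} J_s(−λ_k − D_k) ≥ (1/2)·T^{1/3}·( (4 s^{5/2}/(15π))·(1 − 3ε) − (θ₁ + 1)·s − Σ_{k=θ₁+1}^{θ₂−1} D_k ). -/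
import Mathlib


/-- `J T s x = (1/2)·log(1 + exp(T^{1/3}·(x+s)))`. -/
noncomputable def J (T s x : ℝ) : ℝ :=
  (1/2) * Real.log (1 + Real.exp (T ^ ((1:ℝ)/3) * (x + s)))

/-- The Airy-eigenvalue property with constant `K`. -/
def AiryEigenvalueProperty (lam : ℕ → ℝ) (K : ℝ) : Prop :=
  (∀ k : ℕ, 1 ≤ k → 0 < lam k) ∧
  (∀ j k : ℕ, 1 ≤ j → j ≤ k → lam j ≤ lam k) ∧
  (∀ k : ℕ, 1 ≤ k → ∃ R : ℝ, |R| ≤ K / k ∧ 0 < (k : ℝ) - 1/4 + R ∧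
    lam k = ((3 * Real.pi / 2) * ((k : ℝ) - 1/4 + R)) ^ ((2:ℝ)/3))

lemma bern53 (a : ℝ) (ha : 1 ≤ a) :
    a ^ ((5:ℝ)/3) + (5/3) * a ^ ((2:ℝ)/3) ≤ (a + 1) ^ ((5:ℝ)/3) := by
  have ha0 : (0:ℝ) < a := lt_of_lt_of_le one_pos ha
  have hinv : (0:ℝ) ≤ 1/a := by positivity
  have h1 : (1:ℝ) + (5/3) * (1/a) ≤ (1 + 1/a) ^ ((5:ℝ)/3) :=
    one_add_mul_self_le_rpow_one_add (by linarith) (by norm_num)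
  have h2 : (a + 1) ^ ((5:ℝ)/3) = a ^ ((5:ℝ)/3) * (1 + 1/a) ^ ((5:ℝ)/3) := by
    rw [← Real.mul_rpow ha0.le (by positivity)]
    congr 1
    field_simp
  have h3 : a ^ ((5:ℝ)/3) * (1/a) = a ^ ((2:ℝ)/3) := by
    rw [one_div, ← Real.rpow_neg_one a, ← Real.rpow_add ha0]
    norm_num
  have h4 : a ^ ((5:ℝ)/3) * (1 + (5/3) * (1/a)) ≤ a ^ ((5:ℝ)/3) * (1 + 1/a) ^ ((5:ℝ)/3) :=
    mul_le_mul_of_nonneg_left h1 (by positivity)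
  calc a ^ ((5:ℝ)/3) + (5/3) * a ^ ((2:ℝ)/3)
      = a ^ ((5:ℝ)/3) * (1 + (5/3) * (1/a)) := by rw [mul_add, mul_one, ← mul_assoc,
        mul_comm (a ^ ((5:ℝ)/3)) ((5:ℝ)/3), mul_assoc, h3]
    _ ≤ a ^ ((5:ℝ)/3) * (1 + 1/a) ^ ((5:ℝ)/3) := h4
    _ = (a + 1) ^ ((5:ℝ)/3) := h2.symm

lemma sum_pow23 (N : ℕ) :
    ∑ k ∈ Finset.Icc 1 N, (k:ℝ) ^ ((2:ℝ)/3) ≤ 3/5 * ((N:ℝ) + 1) ^ ((5:ℝ)/3) := by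
  induction N with
  | zero => simp; positivity
  | succ n ih =>
    rw [Finset.sum_Icc_succ_top (by omega)]
    have hb := bern53 ((n:ℝ) + 1) (by linarith [Nat.cast_nonneg (α := ℝ) n])
    push_cast
    push_cast at hb
    nlinarith [hb]


lemma log_lin (y : ℝ) : y ≤ Real.log (1 + Real.exp y) := by
  calc y = Real.log (Real.exp y) := (Real.log_exp y).symm
    _ ≤ Real.log (1 + Real.exp y) :=
        Real.log_le_log (Real.exp_pos y) (by linarith [Real.exp_pos y])

set_option maxHeartbeats 1000000 in
theorem middle_block_lower_bound (ε K : ℝ) (hε : ε ∈ Set.Ioo (0:ℝ) (1/3)) (hK : 0 < K)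
    (lam : ℕ → ℝ) (hlam : AiryEigenvalueProperty lam K) :
    ∃ S₀ : ℝ, 0 < S₀ ∧
      ∀ s : ℝ, S₀ ≤ s → ∀ T : ℝ, 0 ≤ T → ∀ D : ℕ → ℝ, (∀ k, 0 ≤ D k) →
        ⌈4 * K⌉₊ < ⌈2 * s ^ ((3:ℝ)/2) / (3 * Real.pi) + 1/2⌉₊ ∧
        (1/2) * T ^ ((1:ℝ)/3) *
            (4 * s ^ ((5:ℝ)/2) / (15 * Real.pi) * (1 - 3 * ε)
              - ((⌈4 * K⌉₊ : ℝ) + 1) * s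
              - ∑ k ∈ Finset.Icc (⌈4 * K⌉₊ + 1) (⌈2 * s ^ ((3:ℝ)/2) / (3 * Real.pi) + 1/2⌉₊ - 1),
                  D k)
          ≤ ∑ k ∈ Finset.Icc (⌈4 * K⌉₊ + 1) (⌈2 * s ^ ((3:ℝ)/2) / (3 * Real.pi) + 1/2⌉₊ - 1),
              J T s (-lam k - D k) := by
  obtain ⟨hε0, hε3⟩ := hε
  have hπ : (0:ℝ) < Real.pi := Real.pi_pos
  set θ₁ : ℕ := ⌈4 * K⌉₊ with hθ₁
  have h4K : 4 * K ≤ (θ₁ : ℝ) := Nat.le_ceil _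
  clear_value θ₁
  refine ⟨((3 * Real.pi / 2) * ((θ₁ : ℝ) + 3 + 9 / (4 * ε))) ^ ((2:ℝ)/3) + 1, ?_, ?_⟩
  · positivity
  intro s hs T hT D hD
  have hs1 : (1:ℝ) ≤ s := by
    have h0 : (0:ℝ) ≤ ((3 * Real.pi / 2) * ((θ₁ : ℝ) + 3 + 9 / (4 * ε))) ^ ((2:ℝ)/3) := by
      positivity
    linarith
  have hs0 : (0:ℝ) < s := lt_of_lt_of_le one_pos hs1
  set A : ℝ := 2 * s ^ ((3:ℝ)/2) / (3 * Real.pi) with hA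
  have hA0 : 0 < A := by rw [hA]; positivity
  -- A ≥ C
  have hAC : (θ₁ : ℝ) + 3 + 9 / (4 * ε) ≤ A := by
    have hC0 : (0:ℝ) < (θ₁ : ℝ) + 3 + 9 / (4 * ε) := by positivity
    have h1 : ((3 * Real.pi / 2) * ((θ₁ : ℝ) + 3 + 9 / (4 * ε))) ^ ((2:ℝ)/3) ≤ s := by
      linarith
    have h2 : (((3 * Real.pi / 2) * ((θ₁ : ℝ) + 3 + 9 / (4 * ε))) ^ ((2:ℝ)/3)) ^ ((3:ℝ)/2)
        ≤ s ^ ((3:ℝ)/2) := Real.rpow_le_rpow (by positivity) h1 (by norm_num)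
    rw [← Real.rpow_mul (by positivity)] at h2
    norm_num at h2
    rw [hA, le_div_iff₀ (by positivity)]
    nlinarith
  clear_value A
  have hAθ : (θ₁ : ℝ) + 3 ≤ A := by
    have : 0 < 9 / (4 * ε) := by positivity
    linarith
  have hAε : 9 / (4 * ε) ≤ A := by linarith [Nat.cast_nonneg (α := ℝ) θ₁]
  set θ₂ : ℕ := ⌈A + 1/2⌉₊ with hθ₂
  have hθ₂low : A + 1/2 ≤ (θ₂ : ℝ) := Nat.le_ceil _
  have hθ₂up : (θ₂ : ℝ) < A + 1/2 + 1 := Nat.ceil_lt_add_one (by positivity)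
  clear_value θ₂
  have hθlt : θ₁ < θ₂ := by
    have : (θ₁ : ℝ) < (θ₂ : ℝ) := by linarith
    exact_mod_cast this
  refine ⟨hθlt, ?_⟩
  set N : ℕ := θ₂ - 1 with hN
  have hθ₂1 : 1 ≤ θ₂ := by omega
  have hNcast : (N : ℝ) = (θ₂ : ℝ) - 1 := by
    rw [hN]; push_cast [Nat.cast_sub hθ₂1]; ring
  clear_value N
  have hθ₁N : θ₁ ≤ N := by omega
  -- termwise bound on lam k
  have hlamb : ∀ k ∈ Finset.Icc (θ₁ + 1) N,
      lam k ≤ (3 * Real.pi / 2) ^ ((2:ℝ)/3) * (k : ℝ) ^ ((2:ℝ)/3) := by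
    intro k hk
    rw [Finset.mem_Icc] at hk
    have hk1 : 1 ≤ k := by omega
    obtain ⟨R, hR, hpos, heq⟩ := hlam.2.2 k hk1
    have hkc : (θ₁ : ℝ) + 1 ≤ (k : ℝ) := by exact_mod_cast hk.1
    have hk0 : (0:ℝ) < k := by exact_mod_cast hk1
    have hRk : R ≤ 1/4 := by
      have h1 : R ≤ K / k := le_trans (le_abs_self R) hR
      have h2 : K / k ≤ 1/4 := by
        rw [div_le_iff₀ hk0]
        linarith
      linarith
    rw [heq, ← Real.mul_rpow (by positivity) (Nat.cast_nonneg k)]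
    exact Real.rpow_le_rpow (by positivity) (by nlinarith) (by norm_num)
  -- pointwise J bound
  have hJ : ∀ k, (1/2) * T ^ ((1:ℝ)/3) * (s - lam k - D k) ≤ J T s (-lam k - D k) := by
    intro k
    have := log_lin (T ^ ((1:ℝ)/3) * (-lam k - D k + s))
    have h2 : (1/2) * (T ^ ((1:ℝ)/3) * (-lam k - D k + s)) ≤ J T s (-lam k - D k) := by
      unfold J
      linarith
    calc (1/2) * T ^ ((1:ℝ)/3) * (s - lam k - D k)
        = (1/2) * (T ^ ((1:ℝ)/3) * (-lam k - D k + s)) := by ring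
      _ ≤ J T s (-lam k - D k) := h2
  have hT3 : 0 ≤ T ^ ((1:ℝ)/3) := Real.rpow_nonneg hT _
  have hc : (0:ℝ) ≤ (3 * Real.pi / 2) ^ ((2:ℝ)/3) := by positivity
  have hsum_lam : ∑ k ∈ Finset.Icc (θ₁+1) N, lam k
      ≤ (3 * Real.pi / 2) ^ ((2:ℝ)/3) * (3/5 * ((N:ℝ)+1) ^ ((5:ℝ)/3)) := by
    calc ∑ k ∈ Finset.Icc (θ₁+1) N, lam k
        ≤ ∑ k ∈ Finset.Icc (θ₁+1) N, (3 * Real.pi / 2) ^ ((2:ℝ)/3) * (k:ℝ) ^ ((2:ℝ)/3) :=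
          Finset.sum_le_sum hlamb
      _ = (3 * Real.pi / 2) ^ ((2:ℝ)/3) * ∑ k ∈ Finset.Icc (θ₁+1) N, (k:ℝ) ^ ((2:ℝ)/3) :=
          (Finset.mul_sum _ _ _).symm
      _ ≤ (3 * Real.pi / 2) ^ ((2:ℝ)/3) * ∑ k ∈ Finset.Icc 1 N, (k:ℝ) ^ ((2:ℝ)/3) := by
          refine mul_le_mul_of_nonneg_left ?_ hc
          refine Finset.sum_le_sum_of_subset_of_nonneg
            (Finset.Icc_subset_Icc (by omega) le_rfl) ?_
          intro i _ _; positivity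
      _ ≤ (3 * Real.pi / 2) ^ ((2:ℝ)/3) * (3/5 * ((N:ℝ)+1) ^ ((5:ℝ)/3)) :=
          mul_le_mul_of_nonneg_left (sum_pow23 N) hc
  have hcard : ((Finset.Icc (θ₁+1) N).card : ℝ) = (N:ℝ) - (θ₁:ℝ) := by
    rw [Nat.card_Icc]
    have h : N + 1 - (θ₁ + 1) = N - θ₁ := by omega
    rw [h, Nat.cast_sub hθ₁N]
  have hsplit : ∑ k ∈ Finset.Icc (θ₁+1) N, (s - lam k - D k)
      = ((N:ℝ) - (θ₁:ℝ)) * s - (∑ k ∈ Finset.Icc (θ₁+1) N, lam k)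
        - ∑ k ∈ Finset.Icc (θ₁+1) N, D k := by
    rw [Finset.sum_sub_distrib, Finset.sum_sub_distrib, Finset.sum_const, nsmul_eq_mul, hcard]
  have hs52 : s ^ ((3:ℝ)/2) * s = s ^ ((5:ℝ)/2) := by
    calc s ^ ((3:ℝ)/2) * s = s ^ ((3:ℝ)/2) * s ^ (1:ℝ) := by rw [Real.rpow_one]
      _ = s ^ ((3:ℝ)/2 + 1) := (Real.rpow_add hs0 _ _).symm
      _ = s ^ ((5:ℝ)/2) := by norm_num
  have hAs : A * s = 2/(3*Real.pi) * s ^ ((5:ℝ)/2) := by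
    rw [hA, ← hs52]; ring
  have hA53 : A ^ ((5:ℝ)/3) = (2/(3*Real.pi)) ^ ((5:ℝ)/3) * s ^ ((5:ℝ)/2) := by
    rw [hA]
    have h1 : 2 * s ^ ((3:ℝ)/2)/(3*Real.pi) = (2/(3*Real.pi)) * s ^ ((3:ℝ)/2) := by ring
    rw [h1, Real.mul_rpow (by positivity) (by positivity), ← Real.rpow_mul hs0.le]
    norm_num
  have hcb : (3*Real.pi/2) ^ ((2:ℝ)/3) * (2/(3*Real.pi)) ^ ((5:ℝ)/3) = 2/(3*Real.pi) := by
    have hb : (0:ℝ) < 2/(3*Real.pi) := by positivity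
    have h1 : (3*Real.pi/2) = (2/(3*Real.pi)) ^ (-1:ℝ) := by
      rw [Real.rpow_neg_one]; field_simp
    rw [h1, ← Real.rpow_mul hb.le, ← Real.rpow_add hb]
    norm_num
  have hθ₂s : 2/(3*Real.pi) * s ^ ((5:ℝ)/2) ≤ (θ₂:ℝ) * s := by
    have h := mul_le_mul_of_nonneg_right (show A ≤ (θ₂:ℝ) by linarith) hs0.le
    linarith [hAs, h]
  have h9 : 3/2 ≤ A * (2*ε/3) := by
    rw [div_le_iff₀ (by positivity)] at hAε
    nlinarith
  have hup : (θ₂:ℝ) ≤ A * (1 + 2*ε/3) := by nlinarith [hθ₂up]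
  have h23 : (θ₂:ℝ) ^ ((5:ℝ)/3) ≤ A ^ ((5:ℝ)/3) * (1 + 2*ε) := by
    calc (θ₂:ℝ) ^ ((5:ℝ)/3) ≤ (A * (1 + 2*ε/3)) ^ ((5:ℝ)/3) :=
        Real.rpow_le_rpow (Nat.cast_nonneg _) hup (by norm_num)
      _ = A ^ ((5:ℝ)/3) * (1 + 2*ε/3) ^ ((5:ℝ)/3) := Real.mul_rpow hA0.le (by linarith)
      _ ≤ A ^ ((5:ℝ)/3) * (1 + 2*ε) := by
          refine mul_le_mul_of_nonneg_left ?_ (by positivity)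
          calc (1 + 2*ε/3) ^ ((5:ℝ)/3) ≤ (1 + 2*ε/3) ^ ((2:ℝ)) :=
              Real.rpow_le_rpow_of_exponent_le (by linarith) (by norm_num)
            _ = (1 + 2*ε/3)^2 := Real.rpow_two _
            _ ≤ 1 + 2*ε := by nlinarith
  have hθ₂53 : (3*Real.pi/2) ^ ((2:ℝ)/3) * (θ₂:ℝ) ^ ((5:ℝ)/3)
      ≤ 2/(3*Real.pi) * (1 + 2*ε) * s ^ ((5:ℝ)/2) := by
    calc (3*Real.pi/2) ^ ((2:ℝ)/3) * (θ₂:ℝ) ^ ((5:ℝ)/3)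
        ≤ (3*Real.pi/2) ^ ((2:ℝ)/3) * (A ^ ((5:ℝ)/3) * (1 + 2*ε)) :=
          mul_le_mul_of_nonneg_left h23 hc
      _ = ((3*Real.pi/2) ^ ((2:ℝ)/3) * (2/(3*Real.pi)) ^ ((5:ℝ)/3)) * (1 + 2*ε)
            * s ^ ((5:ℝ)/2) := by rw [hA53]; ring
      _ = 2/(3*Real.pi) * (1 + 2*ε) * s ^ ((5:ℝ)/2) := by rw [hcb]
  have hcoeff : 4 * s ^ ((5:ℝ)/2) / (15 * Real.pi) * (1 - 3*ε)
      = 2/(3*Real.pi) * s ^ ((5:ℝ)/2) - 3/5 * (2/(3*Real.pi) * (1 + 2*ε) * s ^ ((5:ℝ)/2)) := by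
    field_simp
    ring
  have hkey : 4 * s ^ ((5:ℝ)/2) / (15 * Real.pi) * (1 - 3*ε) - ((θ₁:ℝ)+1)*s
      ≤ ((N:ℝ) - (θ₁:ℝ)) * s - (3*Real.pi/2) ^ ((2:ℝ)/3) * (3/5 * ((N:ℝ)+1) ^ ((5:ℝ)/3)) := by
    rw [hNcast]
    have h : (θ₂:ℝ) - 1 + 1 = (θ₂:ℝ) := by ring
    rw [h]
    nlinarith [hθ₂s, hθ₂53, hcoeff]
  calc (1/2) * T ^ ((1:ℝ)/3) *
        (4 * s ^ ((5:ℝ)/2) / (15 * Real.pi) * (1 - 3 * ε) - ((θ₁:ℝ) + 1) * s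
          - ∑ k ∈ Finset.Icc (θ₁+1) N, D k)
      ≤ (1/2) * T ^ ((1:ℝ)/3) * ∑ k ∈ Finset.Icc (θ₁+1) N, (s - lam k - D k) := by
        refine mul_le_mul_of_nonneg_left ?_ (by positivity)
        rw [hsplit]
        linarith [hsum_lam, hkey]
    _ = ∑ k ∈ Finset.Icc (θ₁+1) N, (1/2) * T ^ ((1:ℝ)/3) * (s - lam k - D k) := by
        rw [Finset.mul_sum]
    _ ≤ ∑ k ∈ Finset.Icc (θ₁+1) N, J T s (-lam k - D k) :=
        Finset.sum_le_sum (fun k _ => hJ k)
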